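/- Let A = A(r,R) with 0 < r < R, and let z₁, z₂ ∈ A with |z₂| ≤ |z₁|. Then d_A(z₁,z₂) ≤ π²/(mod(A)·K̂₀) + (π/(mod(A)·K̂₁)) · log(|z₁|/|z₂|), where K̂₀ = max_{j=1,2} sin(π log(R/|z_j|)/mod(A)) and K̂₁ = min_{j=1,2} sin(π log(R/|z_j|)/mod(A)). -/

import Mathlib

open Real Complex

set_option maxHeartbeats 1000000

section Helpers
open Filter

lemma expNegInvGlue_monotone : Monotone expNegInvGlue := by
  intro a b hab
  unfold expNegInvGlue
  rcases le_or_gt a 0 with ha | ha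
  · simp only [if_pos ha]
    split <;> positivity
  · rw [if_neg (not_le.2 ha), if_neg (not_le.2 (ha.trans_le hab))]
    exact Real.exp_le_exp.2 (by
      have := inv_anti₀ ha hab
      linarith)

lemma smoothTransition_monotone : Monotone Real.smoothTransition := by
  intro x y hxy
  unfold Real.smoothTransition
  rw [div_le_div_iff₀ (Real.smoothTransition.pos_denom x) (Real.smoothTransition.pos_denom y)]
  have h1 : expNegInvGlue x ≤ expNegInvGlue y := expNegInvGlue_monotone hxy
  have h2 : expNegInvGlue (1 - y) ≤ expNegInvGlue (1 - x) := expNegInvGlue_monotone (by linarith)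
  have h3 := expNegInvGlue.nonneg x
  have h4 := expNegInvGlue.nonneg (1 - y)
  nlinarith

lemma deriv_smoothTransition_nonneg (x : ℝ) : 0 ≤ deriv Real.smoothTransition x := by
  have hd : HasDerivAt Real.smoothTransition (deriv Real.smoothTransition x) x :=
    ((Real.smoothTransition.contDiff (n := 1)).differentiable one_ne_zero x).hasDerivAt
  have ht : Filter.Tendsto (slope Real.smoothTransition x) (nhdsWithin x (Set.Ioi x))
      (nhds (deriv Real.smoothTransition x)) :=
    (hasDerivAt_iff_tendsto_slope.1 hd).mono_left
      (nhdsWithin_mono x fun y hy => Set.mem_setOf.2 (ne_of_gt hy))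
  refine ge_of_tendsto ht ?_
  filter_upwards [self_mem_nhdsWithin] with y hy
  have hxy : x < y := hy
  rw [slope_def_field]
  exact div_nonneg (sub_nonneg.2 (smoothTransition_monotone hxy.le)) (by linarith)

lemma deriv_smoothTransition_zero {x : ℝ} (hx : x ≤ 0 ∨ 1 ≤ x) :
    deriv Real.smoothTransition x = 0 := by
  have hcont : Continuous (deriv Real.smoothTransition) :=
    (Real.smoothTransition.contDiff (n := 1)).continuous_deriv le_rfl
  rcases hx with hx | hx
  · have hlt : ∀ y : ℝ, y < 0 → deriv Real.smoothTransition y = 0 := by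
      intro y hy
      have hev : Real.smoothTransition =ᶠ[nhds y] fun _ => (0 : ℝ) := by
        filter_upwards [Iio_mem_nhds hy] with z hz
        exact Real.smoothTransition.zero_of_nonpos hz.le
      rw [hev.deriv_eq, deriv_const]
    rcases lt_or_eq_of_le hx with hx0 | hx0
    · exact hlt x hx0
    · subst hx0
      have h1 : Filter.Tendsto (deriv Real.smoothTransition) (nhdsWithin 0 (Set.Iio 0))
          (nhds (deriv Real.smoothTransition 0)) :=
        (hcont.tendsto 0).mono_left nhdsWithin_le_nhds
      have h2 : Filter.Tendsto (deriv Real.smoothTransition) (nhdsWithin 0 (Set.Iio 0))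
          (nhds 0) := by
        refine Filter.Tendsto.congr' ?_ tendsto_const_nhds
        filter_upwards [self_mem_nhdsWithin] with y hy
        exact (hlt y hy).symm
      exact tendsto_nhds_unique h1 h2
  · have hlt : ∀ y : ℝ, 1 < y → deriv Real.smoothTransition y = 0 := by
      intro y hy
      have hev : Real.smoothTransition =ᶠ[nhds y] fun _ => (1 : ℝ) := by
        filter_upwards [Ioi_mem_nhds hy] with z hz
        exact Real.smoothTransition.one_of_one_le hz.le
      rw [hev.deriv_eq, deriv_const]
    rcases lt_or_eq_of_le hx with hx0 | hx0
    · exact hlt x hx0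
    · subst hx0
      have h1 : Filter.Tendsto (deriv Real.smoothTransition) (nhdsWithin 1 (Set.Ioi 1))
          (nhds (deriv Real.smoothTransition 1)) :=
        (hcont.tendsto 1).mono_left nhdsWithin_le_nhds
      have h2 : Filter.Tendsto (deriv Real.smoothTransition) (nhdsWithin 1 (Set.Ioi 1))
          (nhds 0) := by
        refine Filter.Tendsto.congr' ?_ tendsto_const_nhds
        filter_upwards [self_mem_nhdsWithin] with y hy
        exact (hlt y hy).symm
      exact tendsto_nhds_unique h1 h2

lemma min_sin_le_sin {x y z : ℝ} (hx : 0 ≤ x) (hy : y ≤ π) (hxz : x ≤ z) (hzy : z ≤ y) :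
    min (Real.sin x) (Real.sin y) ≤ Real.sin z := by
  have hxy : x ≤ y := hxz.trans hzy
  refine strictConcaveOn_sin_Icc.concaveOn.ge_on_segment ⟨hx, hxy.trans hy⟩
    ⟨hx.trans hxy, hy⟩ ?_
  rw [segment_eq_Icc hxy]
  exact ⟨hxz, hzy⟩

end Helpers

/-- The round annulus `A(r,R) = {z : r < |z| < R}`. -/
def annulus (r R : ℝ) : Set ℂ := {z : ℂ | r < ‖z‖ ∧ ‖z‖ < R}

/-- The hyperbolic density (curvature `−1`) of the annulus `A(r,R)`. -/
noncomputable def annulusHypDensity (r R : ℝ) (z : ℂ) : ℝ :=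
  π / (‖z‖ * Real.log (R / r) *
    Real.sin (π * Real.log (R / ‖z‖) / Real.log (R / r)))

/-- The hyperbolic distance on the annulus `A(r,R)`: the infimum of the hyperbolic
lengths `∫ λ_A(γ(t)) |γ'(t)| dt` over piecewise smooth (here: `C¹`) paths `γ` in
the annulus joining `z₁` to `z₂`. -/
noncomputable def annulusHypDist (r R : ℝ) (z₁ z₂ : ℂ) : ℝ :=
  sInf { L : ℝ | ∃ γ : ℝ → ℂ, γ 0 = z₁ ∧ γ 1 = z₂ ∧
    (∀ t ∈ Set.Icc (0:ℝ) 1, γ t ∈ annulus r R) ∧ ContDiffOn ℝ 1 γ (Set.Icc (0:ℝ) 1) ∧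
    L = ∫ t in (0:ℝ)..1, annulusHypDensity r R (γ t) * ‖deriv γ t‖ }

/-- Upper bound for the hyperbolic distance in an annulus: for `0 < r < R`,
`z₁, z₂ ∈ A(r,R)` with `|z₂| ≤ |z₁|`,
`d_A(z₁,z₂) ≤ π²/(mod A · K̂₀) + (π/(mod A · K̂₁)) · log (|z₁|/|z₂|)`, where
`K̂ⱼ` are the max/min of `sin (π log (R/|z_j|) / mod A)` and `mod A = log (R/r)`. -/
theorem annulusHypDist_upper_bound (r R : ℝ) (hr : 0 < r) (hrR : r < R)
    (z₁ z₂ : ℂ) (hz₁ : z₁ ∈ annulus r R) (hz₂ : z₂ ∈ annulus r R)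
    (habs : ‖z₂‖ ≤ ‖z₁‖) :
    annulusHypDist r R z₁ z₂ ≤
      π ^ 2 / (Real.log (R / r) *
          max (Real.sin (π * Real.log (R / ‖z₁‖) / Real.log (R / r)))
            (Real.sin (π * Real.log (R / ‖z₂‖) / Real.log (R / r)))) +
        π / (Real.log (R / r) *
          min (Real.sin (π * Real.log (R / ‖z₁‖) / Real.log (R / r)))
            (Real.sin (π * Real.log (R / ‖z₂‖) / Real.log (R / r)))) *
          Real.log (‖z₁‖ / ‖z₂‖) := by
  obtain ⟨hr₁, hR₁⟩ := hz₁
  obtain ⟨hr₂, hR₂⟩ := hz₂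
  have hR : 0 < R := hr.trans hrR
  set ρ₁ := ‖z₁‖ with hρ₁def
  set ρ₂ := ‖z₂‖ with hρ₂def
  set m := Real.log (R / r) with hmdef
  have hρ₁ : 0 < ρ₁ := hr.trans hr₁
  have hρ₂ : 0 < ρ₂ := hr.trans hr₂
  have hm : 0 < m := Real.log_pos ((one_lt_div hr).2 hrR)
  set s₁ := Real.sin (π * Real.log (R / ρ₁) / m) with hs₁def
  set s₂ := Real.sin (π * Real.log (R / ρ₂) / m) with hs₂def
  set a₁ := Real.log ρ₁ with ha₁def
  set a₂ := Real.log ρ₂ with ha₂def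
  have ha₂₁ : a₂ ≤ a₁ := Real.log_le_log hρ₂ habs
  -- basic facts about logs
  have hlog₁ : Real.log (R / ρ₁) = Real.log R - a₁ := Real.log_div hR.ne' hρ₁.ne'
  have hlog₂ : Real.log (R / ρ₂) = Real.log R - a₂ := Real.log_div hR.ne' hρ₂.ne'
  have hu₁pos : 0 < Real.log R - a₁ := by
    rw [← hlog₁]; exact Real.log_pos ((one_lt_div hρ₁).2 hR₁)
  have hu₂pos : 0 < Real.log R - a₂ := by
    rw [← hlog₂]; exact Real.log_pos ((one_lt_div hρ₂).2 hR₂)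
  have hu₁lt : Real.log R - a₁ < m := by
    rw [← hlog₁, hmdef]
    exact Real.log_lt_log (div_pos hR hρ₁) (div_lt_div_of_pos_left hR hr hr₁)
  have hu₂lt : Real.log R - a₂ < m := by
    rw [← hlog₂, hmdef]
    exact Real.log_lt_log (div_pos hR hρ₂) (div_lt_div_of_pos_left hR hr hr₂)
  -- general sine facts along the path
  have key_sin : ∀ x : ℝ, a₂ ≤ x → x ≤ a₁ →
      0 < Real.sin (π * (Real.log R - x) / m) ∧
      min s₁ s₂ ≤ Real.sin (π * (Real.log R - x) / m) := by
    intro x hx₂ hx₁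
    have hpos : 0 < Real.log R - x := by linarith
    have hlt : Real.log R - x < m := by linarith
    have harg1 : 0 < π * (Real.log R - x) / m := by positivity
    have harg2 : π * (Real.log R - x) / m < π := by
      rw [div_lt_iff₀ hm]
      nlinarith [Real.pi_pos]
    constructor
    · exact Real.sin_pos_of_pos_of_lt_pi harg1 harg2
    · rw [hs₁def, hs₂def, hlog₁, hlog₂]
      apply min_sin_le_sin
      · positivity
      · rw [div_le_iff₀ hm]; nlinarith [Real.pi_pos]
      · gcongr
      · gcongr
  have hs₁pos : 0 < s₁ := by
    rw [hs₁def, hlog₁]; exact (key_sin a₁ ha₂₁ le_rfl).1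
  have hs₂pos : 0 < s₂ := by
    rw [hs₂def, hlog₂]; exact (key_sin a₂ le_rfl ha₂₁).1
  set K0 := max s₁ s₂ with hK0def
  set K1 := min s₁ s₂ with hK1def
  have hK0 : 0 < K0 := lt_max_of_lt_left hs₁pos
  have hK1 : 0 < K1 := lt_min hs₁pos hs₂pos
  have hz₁0 : z₁ ≠ 0 := by
    intro h; rw [hρ₁def, h] at hρ₁; simp at hρ₁
  have hz₂0 : z₂ ≠ 0 := by
    intro h; rw [hρ₂def, h] at hρ₂; simp at hρ₂
  set θ := Complex.arg z₁ with hθdef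
  set Δ := Complex.arg (z₂ / z₁) with hΔdef
  have hΔle : |Δ| ≤ π := Complex.abs_arg_le_pi _
  -- choose the arc radius and ordering
  obtain ⟨σ, c, hσc⟩ : ∃ σ c : ℝ,
      (σ = 0 ∧ c = a₂ ∧ s₁ ≤ s₂) ∨ (σ = 1 ∧ c = a₁ ∧ s₂ ≤ s₁) := by
    rcases le_total s₂ s₁ with hcs | hcs
    · exact ⟨1, a₁, Or.inr ⟨rfl, rfl, hcs⟩⟩
    · exact ⟨0, a₂, Or.inl ⟨rfl, rfl, hcs⟩⟩
  have hσ0 : 0 ≤ σ := by rcases hσc with ⟨h, _⟩ | ⟨h, _⟩ <;> rw [h] <;> norm_num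
  have hσ1 : σ ≤ 1 := by rcases hσc with ⟨h, _⟩ | ⟨h, _⟩ <;> rw [h] <;> norm_num
  have hcK0 : Real.sin (π * (Real.log R - c) / m) = K0 := by
    rcases hσc with ⟨_, hc, hcs⟩ | ⟨_, hc, hcs⟩
    · rw [hc, ← hlog₂, ← hs₂def, hK0def, max_eq_right hcs]
    · rw [hc, ← hlog₁, ← hs₁def, hK0def, max_eq_left hcs]
  -- the path
  set A : ℝ → ℝ := fun t => a₁ + (a₂ - a₁) * Real.smoothTransition (2 * t - σ) with hAdef
  set B : ℝ → ℝ := fun t => θ + Δ * Real.smoothTransition (2 * t - (1 - σ)) with hBdef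
  set A' : ℝ → ℝ := fun t => (a₂ - a₁) * (2 * deriv Real.smoothTransition (2 * t - σ))
    with hA'def
  set B' : ℝ → ℝ := fun t => Δ * (2 * deriv Real.smoothTransition (2 * t - (1 - σ)))
    with hB'def
  set γ : ℝ → ℂ := fun t => Complex.exp ((A t : ℂ) + (B t : ℂ) * Complex.I) with hγdef
  have hst_diff : Differentiable ℝ Real.smoothTransition :=
    (Real.smoothTransition.contDiff (n := 1)).differentiable one_ne_zero
  have haff : ∀ v t : ℝ, HasDerivAt (fun t : ℝ => 2 * t - v) 2 t := by
    intro v t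
    simpa using ((hasDerivAt_id t).const_mul (2 : ℝ)).sub_const v
  have hst : ∀ v t : ℝ, HasDerivAt (fun t : ℝ => Real.smoothTransition (2 * t - v))
      (2 * deriv Real.smoothTransition (2 * t - v)) t := by
    intro v t
    have h1 := (hst_diff (2 * t - v)).hasDerivAt
    simpa [mul_comm, Function.comp_def] using h1.comp t (haff v t)
  have hA : ∀ t, HasDerivAt A (A' t) t := fun t =>
    ((hst σ t).const_mul (a₂ - a₁)).const_add a₁
  have hB : ∀ t, HasDerivAt B (B' t) t := fun t =>
    ((hst (1 - σ) t).const_mul Δ).const_add θ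
  have hγd : ∀ t, HasDerivAt γ ((((A' t : ℂ)) + (B' t : ℂ) * Complex.I) * γ t) t := by
    intro t
    have h1 : HasDerivAt (fun t : ℝ => (A t : ℂ) + (B t : ℂ) * Complex.I)
        ((A' t : ℂ) + (B' t : ℂ) * Complex.I) t :=
      ((hA t).ofReal_comp).add (((hB t).ofReal_comp).mul_const Complex.I)
    simpa [hγdef, mul_comm] using h1.cexp
  have hγderiv : ∀ t, deriv γ t = ((A' t : ℂ) + (B' t : ℂ) * Complex.I) * γ t :=
    fun t => (hγd t).deriv
  have habsγ : ∀ t, ‖γ t‖ = Real.exp (A t) := by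
    intro t
    rw [hγdef]
    simp [Complex.norm_exp]
  have hAmem : ∀ t, a₂ ≤ A t ∧ A t ≤ a₁ := by
    intro t
    have h0 := Real.smoothTransition.nonneg (2 * t - σ)
    have h1 := Real.smoothTransition.le_one (2 * t - σ)
    have hval : A t = a₁ + (a₂ - a₁) * Real.smoothTransition (2 * t - σ) := rfl
    rw [hval]
    have hm1 : (a₂ - a₁) * 1 ≤ (a₂ - a₁) * Real.smoothTransition (2 * t - σ) :=
      mul_le_mul_of_nonpos_left h1 (by linarith)
    have hm2 : (a₂ - a₁) * Real.smoothTransition (2 * t - σ) ≤ 0 :=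
      mul_nonpos_of_nonpos_of_nonneg (by linarith) h0
    constructor <;> linarith
  have hγmem : ∀ t, γ t ∈ annulus r R := by
    intro t
    have h2 := (hAmem t).1
    have h1 := (hAmem t).2
    constructor
    · rw [habsγ t]
      calc r < ρ₂ := hr₂
        _ = Real.exp a₂ := (Real.exp_log hρ₂).symm
        _ ≤ Real.exp (A t) := Real.exp_le_exp.2 h2
    · rw [habsγ t]
      calc Real.exp (A t) ≤ Real.exp a₁ := Real.exp_le_exp.2 h1
        _ = ρ₁ := Real.exp_log hρ₁
        _ < R := hR₁
  -- endpoints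
  have hexpθ : Complex.exp ((θ : ℂ) * Complex.I) = z₁ / ρ₁ := by
    rw [hθdef, eq_div_iff (by exact_mod_cast hρ₁.ne')]
    rw [mul_comm]
    exact_mod_cast (Complex.norm_mul_exp_arg_mul_I z₁)
  have hexpΔ : Complex.exp ((Δ : ℂ) * Complex.I) = (z₂ / z₁) / ((ρ₂ / ρ₁ : ℝ) : ℂ) := by
    have habsq : ‖z₂ / z₁‖ = ρ₂ / ρ₁ := by
      rw [norm_div]
    rw [hΔdef, eq_div_iff]
    · rw [mul_comm, ← habsq]
      exact_mod_cast (Complex.norm_mul_exp_arg_mul_I (z₂ / z₁))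
    · exact_mod_cast (div_pos hρ₂ hρ₁).ne'
  have hρ₁C : ((ρ₁ : ℝ) : ℂ) ≠ 0 := by exact_mod_cast hρ₁.ne'
  have hρ₂C : ((ρ₂ : ℝ) : ℂ) ≠ 0 := by exact_mod_cast hρ₂.ne'
  have hγ0 : γ 0 = z₁ := by
    have hA0 : A 0 = a₁ := by
      have hval : A 0 = a₁ + (a₂ - a₁) * Real.smoothTransition (2 * 0 - σ) := rfl
      rw [hval, Real.smoothTransition.zero_of_nonpos (by linarith)]
      ring
    have hB0 : B 0 = θ := by
      have hval : B 0 = θ + Δ * Real.smoothTransition (2 * 0 - (1 - σ)) := rfl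
      rw [hval, Real.smoothTransition.zero_of_nonpos (by linarith)]
      ring
    have hval : γ 0 = Complex.exp ((A 0 : ℂ) + (B 0 : ℂ) * Complex.I) := rfl
    rw [hval, hA0, hB0, Complex.exp_add, hexpθ, ← Complex.ofReal_exp, Real.exp_log hρ₁]
    rw [mul_div_assoc', mul_comm, mul_div_assoc]
    rw [div_self hρ₁C, mul_one]
  have hγ1 : γ 1 = z₂ := by
    have hA1 : A 1 = a₂ := by
      have hval : A 1 = a₁ + (a₂ - a₁) * Real.smoothTransition (2 * 1 - σ) := rfl
      rw [hval, Real.smoothTransition.one_of_one_le (by linarith)]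
      ring
    have hB1 : B 1 = θ + Δ := by
      have hval : B 1 = θ + Δ * Real.smoothTransition (2 * 1 - (1 - σ)) := rfl
      rw [hval, Real.smoothTransition.one_of_one_le (by linarith)]
      ring
    have hval : γ 1 = Complex.exp ((A 1 : ℂ) + (B 1 : ℂ) * Complex.I) := rfl
    rw [hval, hA1, hB1, Complex.ofReal_add, add_mul, Complex.exp_add, Complex.exp_add,
      hexpθ, hexpΔ, ← Complex.ofReal_exp, Real.exp_log hρ₂]
    have hz₁C : z₁ ≠ 0 := hz₁0
    rw [Complex.ofReal_div]
    field_simp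
  -- the hyperbolic length integrand along γ
  have hdens : ∀ t, annulusHypDensity r R (γ t) * ‖deriv γ t‖ =
      π * ‖(A' t : ℂ) + (B' t : ℂ) * Complex.I‖ /
        (m * Real.sin (π * (Real.log R - A t) / m)) := by
    intro t
    rw [hγderiv t]
    unfold annulusHypDensity
    rw [norm_mul, habsγ t]
    have hlog : Real.log (R / Real.exp (A t)) = Real.log R - A t := by
      rw [Real.log_div hR.ne' (Real.exp_ne_zero _), Real.log_exp]
    rw [hlog]
    have hS : 0 < Real.sin (π * (Real.log R - A t) / m) :=
      (key_sin (A t) (hAmem t).1 (hAmem t).2).1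
    have hE : (0:ℝ) < Real.exp (A t) := Real.exp_pos _
    rw [← hmdef]
    field_simp
  -- the comparison function G
  set G : ℝ → ℝ := fun t =>
    π * π * (2 * deriv Real.smoothTransition (2 * t - (1 - σ))) / (m * K0) +
    π * (a₁ - a₂) * (2 * deriv Real.smoothTransition (2 * t - σ)) / (m * K1) with hGdef
  have hGval : ∀ t, G t =
      π * π * (2 * deriv Real.smoothTransition (2 * t - (1 - σ))) / (m * K0) +
      π * (a₁ - a₂) * (2 * deriv Real.smoothTransition (2 * t - σ)) / (m * K1) :=
    fun t => rfl
  have hterm1_nonneg : ∀ t, 0 ≤ π * π * (2 * deriv Real.smoothTransition (2 * t - (1 - σ)))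
      / (m * K0) := by
    intro t
    have h1 := deriv_smoothTransition_nonneg (2 * t - (1 - σ))
    apply div_nonneg _ (mul_pos hm hK0).le
    have hpi := Real.pi_pos
    exact mul_nonneg (mul_nonneg hpi.le hpi.le) (by linarith)
  have hterm2_nonneg : ∀ t, 0 ≤ π * (a₁ - a₂) * (2 * deriv Real.smoothTransition (2 * t - σ))
      / (m * K1) := by
    intro t
    have h1 := deriv_smoothTransition_nonneg (2 * t - σ)
    apply div_nonneg _ (mul_pos hm hK1).le
    have hpi := Real.pi_pos
    exact mul_nonneg (mul_nonneg hpi.le (by linarith)) (by linarith)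
  have hbound : ∀ t ∈ Set.Icc (0:ℝ) 1,
      annulusHypDensity r R (γ t) * ‖deriv γ t‖ ≤ G t := by
    intro t _
    rw [hdens t]
    obtain ⟨hSpos, hSK1⟩ := key_sin (A t) (hAmem t).1 (hAmem t).2
    by_cases hB'0 : B' t = 0
    · -- purely radial motion at time t
      rw [hB'0]
      have habs0 : ‖(A' t : ℂ) + ((0:ℝ) : ℂ) * Complex.I‖ = |A' t| := by
        simp
      rw [habs0]
      have hd := deriv_smoothTransition_nonneg (2 * t - σ)
      have hA'abs : |A' t| = (a₁ - a₂) * (2 * deriv Real.smoothTransition (2 * t - σ)) := by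
        have hval : A' t = (a₂ - a₁) * (2 * deriv Real.smoothTransition (2 * t - σ)) := rfl
        rw [hval, abs_mul, abs_of_nonpos (by linarith : a₂ - a₁ ≤ 0),
          _root_.abs_of_nonneg (by linarith : (0:ℝ) ≤ 2 * deriv Real.smoothTransition (2 * t - σ))]
        ring
      rw [hA'abs]
      have h1 : π * ((a₁ - a₂) * (2 * deriv Real.smoothTransition (2 * t - σ))) /
          (m * Real.sin (π * (Real.log R - A t) / m)) ≤
          π * (a₁ - a₂) * (2 * deriv Real.smoothTransition (2 * t - σ)) / (m * K1) := by
        rw [← mul_assoc]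
        gcongr
      calc π * ((a₁ - a₂) * (2 * deriv Real.smoothTransition (2 * t - σ))) /
          (m * Real.sin (π * (Real.log R - A t) / m)) ≤
          π * (a₁ - a₂) * (2 * deriv Real.smoothTransition (2 * t - σ)) / (m * K1) := h1
        _ ≤ G t := by
          rw [hGval t]
          linarith [hterm1_nonneg t]
    · -- motion along the arc at time t
      have hdB : deriv Real.smoothTransition (2 * t - (1 - σ)) ≠ 0 := by
        intro h0
        apply hB'0
        have hval : B' t = Δ * (2 * deriv Real.smoothTransition (2 * t - (1 - σ))) := rfl
        rw [hval, h0]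
        ring
      have hsupp : 0 < 2 * t - (1 - σ) ∧ 2 * t - (1 - σ) < 1 := by
        rcases le_or_gt (2 * t - (1 - σ)) 0 with h | h
        · exact absurd (deriv_smoothTransition_zero (Or.inl h)) hdB
        rcases le_or_gt 1 (2 * t - (1 - σ)) with h' | h'
        · exact absurd (deriv_smoothTransition_zero (Or.inr h')) hdB
        exact ⟨h, h'⟩
      have hAt : A t = c ∧ A' t = 0 := by
        have hvalA : A t = a₁ + (a₂ - a₁) * Real.smoothTransition (2 * t - σ) := rfl
        have hvalA' : A' t = (a₂ - a₁) * (2 * deriv Real.smoothTransition (2 * t - σ)) := rfl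
        rcases hσc with ⟨hσ0', hc, _⟩ | ⟨hσ0', hc, _⟩
        · have h1le : (1:ℝ) ≤ 2 * t - σ := by
            rw [hσ0']; rw [hσ0'] at hsupp; linarith [hsupp.1]
          constructor
          · rw [hvalA, Real.smoothTransition.one_of_one_le h1le, hc]; ring
          · rw [hvalA', deriv_smoothTransition_zero (Or.inr h1le)]; ring
        · have hle : 2 * t - σ ≤ 0 := by
            rw [hσ0']; rw [hσ0'] at hsupp; linarith [hsupp.2]
          constructor
          · rw [hvalA, Real.smoothTransition.zero_of_nonpos hle, hc]; ring
          · rw [hvalA', deriv_smoothTransition_zero (Or.inl hle)]; ring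
      rw [hAt.2, hAt.1, hcK0]
      have habs0 : ‖((0:ℝ) : ℂ) + (B' t : ℂ) * Complex.I‖ = |B' t| := by
        simp
      rw [habs0]
      have hd := deriv_smoothTransition_nonneg (2 * t - (1 - σ))
      have hB'abs : |B' t| ≤ π * (2 * deriv Real.smoothTransition (2 * t - (1 - σ))) := by
        have hval : B' t = Δ * (2 * deriv Real.smoothTransition (2 * t - (1 - σ))) := rfl
        rw [hval, abs_mul, _root_.abs_of_nonneg (by linarith :
          (0:ℝ) ≤ 2 * deriv Real.smoothTransition (2 * t - (1 - σ)))]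
        exact mul_le_mul_of_nonneg_right hΔle (by linarith)
      calc π * |B' t| / (m * K0) ≤
          π * (π * (2 * deriv Real.smoothTransition (2 * t - (1 - σ)))) / (m * K0) := by
            gcongr
        _ ≤ G t := by
          rw [hGval t]
          have heq : π * (π * (2 * deriv Real.smoothTransition (2 * t - (1 - σ)))) =
              π * π * (2 * deriv Real.smoothTransition (2 * t - (1 - σ))) := by ring
          rw [heq]
          linarith [hterm2_nonneg t]
  -- FTC for the transition factors
  have hcont_h' : Continuous (deriv Real.smoothTransition) :=
    (Real.smoothTransition.contDiff (n := 1)).continuous_deriv le_rfl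
  have hcont_aff : ∀ v : ℝ, Continuous (fun t : ℝ => 2 * t - v) := by
    intro v
    exact (continuous_const.mul continuous_id).sub continuous_const
  have hcont_d : ∀ v : ℝ, Continuous (fun t : ℝ => 2 * deriv Real.smoothTransition (2 * t - v)) :=
    fun v => continuous_const.mul (hcont_h'.comp (hcont_aff v))
  have hFTC : ∀ v : ℝ, 0 ≤ v → v ≤ 1 →
      (∫ t in (0:ℝ)..1, 2 * deriv Real.smoothTransition (2 * t - v)) = 1 := by
    intro v hv0 hv1
    rw [intervalIntegral.integral_eq_sub_of_hasDerivAt (fun t _ => hst v t)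
      ((hcont_d v).intervalIntegrable 0 1)]
    rw [Real.smoothTransition.one_of_one_le (by linarith : (1:ℝ) ≤ 2 * 1 - v),
      Real.smoothTransition.zero_of_nonpos (by linarith : 2 * 0 - v ≤ 0)]
    norm_num
  have hGint : (∫ t in (0:ℝ)..1, G t) = π * π / (m * K0) + π * (a₁ - a₂) / (m * K1) := by
    have hGeq : G = fun t =>
        (π * π / (m * K0)) * (2 * deriv Real.smoothTransition (2 * t - (1 - σ))) +
        (π * (a₁ - a₂) / (m * K1)) * (2 * deriv Real.smoothTransition (2 * t - σ)) := by
      funext t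
      rw [hGval t]
      ring
    have hFTC' : ∀ (ca v : ℝ), 0 ≤ v → v ≤ 1 →
        (∫ t in (0:ℝ)..1, ca * (2 * deriv Real.smoothTransition (2 * t - v))) = ca := by
      intro ca v hv0 hv1
      rw [intervalIntegral.integral_const_mul, hFTC v hv0 hv1, mul_one]
    rw [hGeq, intervalIntegral.integral_add
      (f := fun t => π * π / (m * K0) * (2 * deriv Real.smoothTransition (2 * t - (1 - σ))))
      (g := fun t => π * (a₁ - a₂) / (m * K1) * (2 * deriv Real.smoothTransition (2 * t - σ)))
      ((continuous_const.mul (hcont_d (1 - σ))).intervalIntegrable 0 1)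
      ((continuous_const.mul (hcont_d σ)).intervalIntegrable 0 1),
      hFTC' _ (1 - σ) (by linarith) (by linarith), hFTC' _ σ hσ0 hσ1]
  -- continuity of the two integrands
  have hAc : Continuous A :=
    continuous_const.add (continuous_const.mul
      (Real.smoothTransition.continuous.comp (hcont_aff σ)))
  have hA'c : Continuous A' :=
    continuous_const.mul (continuous_const.mul (hcont_h'.comp (hcont_aff σ)))
  have hB'c : Continuous B' :=
    continuous_const.mul (continuous_const.mul (hcont_h'.comp (hcont_aff (1 - σ))))
  have hIc : Continuous (fun t => annulusHypDensity r R (γ t) * ‖deriv γ t‖) := by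
    have : (fun t => annulusHypDensity r R (γ t) * ‖deriv γ t‖) = fun t =>
        π * ‖(A' t : ℂ) + (B' t : ℂ) * Complex.I‖ /
          (m * Real.sin (π * (Real.log R - A t) / m)) := funext hdens
    rw [this]
    apply Continuous.div
    · exact continuous_const.mul (continuous_norm.comp
        (((Complex.continuous_ofReal.comp hA'c)).add
          ((Complex.continuous_ofReal.comp hB'c).mul continuous_const)))
    · exact continuous_const.mul (Real.continuous_sin.comp
        ((continuous_const.mul (continuous_const.sub hAc)).div_const m))
    · intro t
      exact (mul_pos hm (key_sin (A t) (hAmem t).1 (hAmem t).2).1).ne'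
  have hGc : Continuous G := by
    have : G = fun t =>
        π * π * (2 * deriv Real.smoothTransition (2 * t - (1 - σ))) / (m * K0) +
        π * (a₁ - a₂) * (2 * deriv Real.smoothTransition (2 * t - σ)) / (m * K1) := rfl
    rw [this]
    exact ((continuous_const.mul (hcont_d (1 - σ))).div_const _).add
      ((continuous_const.mul (hcont_d σ)).div_const _)
  -- smoothness of γ
  have hγC1 : ContDiffOn ℝ 1 γ (Set.Icc (0:ℝ) 1) := by
    have haffcd : ∀ v : ℝ, ContDiff ℝ 1 (fun t : ℝ => 2 * t - v) :=
      fun v => (contDiff_const.mul contDiff_id).sub contDiff_const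
    have hAcd : ContDiff ℝ 1 A :=
      contDiff_const.add (contDiff_const.mul
        ((Real.smoothTransition.contDiff).comp (haffcd σ)))
    have hBcd : ContDiff ℝ 1 B :=
      contDiff_const.add (contDiff_const.mul
        ((Real.smoothTransition.contDiff).comp (haffcd (1 - σ))))
    have hfcd : ContDiff ℝ 1 (fun t : ℝ => (A t : ℂ) + (B t : ℂ) * Complex.I) :=
      (Complex.ofRealCLM.contDiff.comp hAcd).add
        ((Complex.ofRealCLM.contDiff.comp hBcd).mul contDiff_const)
    exact ((Complex.contDiff_exp (𝕜 := ℝ)).comp hfcd).contDiffOn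
  -- the density is nonnegative on the annulus
  have hdens_nn : ∀ w : ℂ, w ∈ annulus r R → 0 ≤ annulusHypDensity r R w := by
    intro w hw
    obtain ⟨hw1, hw2⟩ := hw
    have hwpos : 0 < ‖w‖ := hr.trans hw1
    have hupos : 0 < Real.log (R / ‖w‖) := Real.log_pos ((one_lt_div hwpos).2 hw2)
    have hult : Real.log (R / ‖w‖) < m := by
      rw [hmdef]
      exact Real.log_lt_log (div_pos hR hwpos) (div_lt_div_of_pos_left hR hr hw1)
    have hsin : 0 < Real.sin (π * Real.log (R / ‖w‖) / m) := by
      apply Real.sin_pos_of_pos_of_lt_pi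
      · positivity
      · rw [div_lt_iff₀ hm]
        nlinarith [Real.pi_pos]
    unfold annulusHypDensity
    rw [← hmdef]
    positivity
  -- assembling everything
  have hmemS : (∫ t in (0:ℝ)..1, annulusHypDensity r R (γ t) * ‖deriv γ t‖) ∈
      { L : ℝ | ∃ γ : ℝ → ℂ, γ 0 = z₁ ∧ γ 1 = z₂ ∧
        (∀ t ∈ Set.Icc (0:ℝ) 1, γ t ∈ annulus r R) ∧ ContDiffOn ℝ 1 γ (Set.Icc (0:ℝ) 1) ∧
        L = ∫ t in (0:ℝ)..1, annulusHypDensity r R (γ t) * ‖deriv γ t‖ } :=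
    ⟨γ, hγ0, hγ1, fun t _ => hγmem t, hγC1, rfl⟩
  have hbdd : BddBelow { L : ℝ | ∃ γ : ℝ → ℂ, γ 0 = z₁ ∧ γ 1 = z₂ ∧
      (∀ t ∈ Set.Icc (0:ℝ) 1, γ t ∈ annulus r R) ∧ ContDiffOn ℝ 1 γ (Set.Icc (0:ℝ) 1) ∧
      L = ∫ t in (0:ℝ)..1, annulusHypDensity r R (γ t) * ‖deriv γ t‖ } := by
    refine ⟨0, fun L hL => ?_⟩
    obtain ⟨γ', _, _, hmem', _, rfl⟩ := hL
    apply intervalIntegral.integral_nonneg zero_le_one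
    intro u hu
    exact mul_nonneg (hdens_nn _ (hmem' u hu)) (norm_nonneg _)
  have hstep1 : annulusHypDist r R z₁ z₂ ≤
      ∫ t in (0:ℝ)..1, annulusHypDensity r R (γ t) * ‖deriv γ t‖ :=
    csInf_le hbdd hmemS
  have hstep2 : (∫ t in (0:ℝ)..1, annulusHypDensity r R (γ t) * ‖deriv γ t‖) ≤
      ∫ t in (0:ℝ)..1, G t :=
    intervalIntegral.integral_mono_on zero_le_one (hIc.intervalIntegrable 0 1)
      (hGc.intervalIntegrable 0 1) hbound
  have hfinal : π * π / (m * K0) + π * (a₁ - a₂) / (m * K1) =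
      π ^ 2 / (m * K0) + π / (m * K1) * Real.log (ρ₁ / ρ₂) := by
    rw [ha₁def, ha₂def, ← Real.log_div hρ₁.ne' hρ₂.ne']
    ring
  calc annulusHypDist r R z₁ z₂ ≤ ∫ t in (0:ℝ)..1, G t := hstep1.trans hstep2
    _ = π * π / (m * K0) + π * (a₁ - a₂) / (m * K1) := hGint
    _ = π ^ 2 / (m * K0) + π / (m * K1) * Real.log (ρ₁ / ρ₂) := hfinal
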